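/- Let A = U − V be a proper splitting of a group invertible real n×n matrix A. Then the matrices I − U#V and I − VU# are nonsingular, and A# = (I − U#V)⁻¹U# = U#(I − VU#)⁻¹. -/

import Mathlib

open Matrix

/-- `X` is the group inverse of `A`. -/
def IsGroupInv {n : ℕ} (A X : Matrix (Fin n) (Fin n) ℝ) : Prop :=
  A * X * A = A ∧ X * A * X = X ∧ A * X = X * A

/-- Spectral radius of a real matrix: sup of moduli of its complex eigenvalues. -/
noncomputable def specRad {n : ℕ} (A : Matrix (Fin n) (Fin n) ℝ) : ℝ :=
  sSup ((fun z : ℂ => ‖z‖) '' spectrum ℂ (A.map (algebraMap ℝ ℂ)))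

/-- `A = U - V` is a proper splitting: `R(U) = R(A)` and `N(U) = N(A)`. -/
def ProperSplitting {n : ℕ} (A U V : Matrix (Fin n) (Fin n) ℝ) : Prop :=
  A = U - V ∧ LinearMap.range U.mulVecLin = LinearMap.range A.mulVecLin ∧
    LinearMap.ker U.mulVecLin = LinearMap.ker A.mulVecLin

/-- Entrywise nonnegativity of a matrix. -/
def Nonneg {n : ℕ} (M : Matrix (Fin n) (Fin n) ℝ) : Prop :=
  ∀ i j, 0 ≤ M i j

lemma ext_of_mulVec_eq {n : ℕ} {M N : Matrix (Fin n) (Fin n) ℝ}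
    (h : ∀ x, M.mulVec x = N.mulVec x) : M = N := by
  ext i j
  have := congrFun (h (Pi.single j 1)) i
  simpa using this

theorem proper_splitting_inverse_formula {n : ℕ} (A U V Ai Ui : Matrix (Fin n) (Fin n) ℝ)
    (hs : ProperSplitting A U V) (hA : IsGroupInv A Ai) (hU : IsGroupInv U Ui) :
    IsUnit (1 - Ui * V) ∧ IsUnit (1 - V * Ui) ∧
    Ai = (1 - Ui * V)⁻¹ * Ui ∧ Ai = Ui * (1 - V * Ui)⁻¹ := by
  obtain ⟨hAUV, hrange, hker⟩ := hs
  obtain ⟨hA1, hA2, hA3⟩ := hA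
  obtain ⟨hU1, hU2, hU3⟩ := hU
  have hV : V = U - A := by rw [hAUV]; abel
  -- (1) U * Ui * A = A
  have h1 : U * Ui * A = A := by
    apply ext_of_mulVec_eq
    intro x
    have hmem : A.mulVec x ∈ LinearMap.range U.mulVecLin := by
      rw [hrange]; exact ⟨x, rfl⟩
    obtain ⟨y, hy⟩ := hmem
    simp only [mulVecLin_apply] at hy
    rw [← mulVec_mulVec, ← hy, mulVec_mulVec, hU1, hy]
  -- (2) U = U * (A * Ai)
  have hAAAi : A * (A * Ai) = A := by rw [hA3, ← Matrix.mul_assoc, hA1]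
  have h2 : U = U * (A * Ai) := by
    apply ext_of_mulVec_eq
    intro x
    have hw : (x - (A * Ai).mulVec x) ∈ LinearMap.ker U.mulVecLin := by
      rw [hker]
      simp only [LinearMap.mem_ker, mulVecLin_apply, mulVec_sub, mulVec_mulVec]
      rw [← Matrix.mul_assoc, Matrix.mul_assoc, hAAAi, sub_self]
    simp only [LinearMap.mem_ker, mulVecLin_apply, mulVec_sub, sub_eq_zero] at hw
    rw [hw, mulVec_mulVec]
  -- key: U * Ui = A * Ai
  have hkey : U * Ui = A * Ai := by
    calc U * Ui = Ui * U := hU3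
      _ = Ui * (U * (A * Ai)) := by rw [← h2]
      _ = (Ui * U) * (A * Ai) := by rw [← Matrix.mul_assoc]
      _ = (U * Ui) * (A * Ai) := by rw [hU3]
      _ = (U * Ui * A) * Ai := by rw [← Matrix.mul_assoc]
      _ = A * Ai := by rw [h1]
  have hQA : (A * Ai) * A = A := hA1
  have hAQ : A * (A * Ai) = A := hAAAi
  have hQAi : (A * Ai) * Ai = Ai := by rw [hA3, hA2]
  have hAiQ : Ai * (A * Ai) = Ai := by rw [← Matrix.mul_assoc, hA2]
  have hQU : (A * Ai) * U = U := by rw [← hkey, hU1]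
  have hUQ : U * (A * Ai) = U := h2.symm
  have hQUi : (A * Ai) * Ui = Ui := by rw [← hkey, hU3, hU2]
  have hUiQ : Ui * (A * Ai) = Ui := by rw [← hkey, ← Matrix.mul_assoc, hU2]
  have hQQ : (A * Ai) * (A * Ai) = A * Ai := by rw [← Matrix.mul_assoc, hA1]
  have hUiU : Ui * U = A * Ai := by rw [← hU3, hkey]
  have hAiA : Ai * A = A * Ai := hA3.symm
  have hE1 : 1 - Ui * V = 1 - A * Ai + Ui * A := by
    rw [hV, Matrix.mul_sub, hUiU]; abel
  have hE2 : 1 - V * Ui = 1 - A * Ai + A * Ui := by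
    rw [hV, Matrix.sub_mul, hkey]; abel
  -- first inverse pair
  have b1 : (A * Ai) * (Ai * U) = Ai * U := by rw [← Matrix.mul_assoc, hQAi]
  have c1 : (Ui * A) * (A * Ai) = Ui * A := by rw [Matrix.mul_assoc, hAQ]
  have d1 : (Ui * A) * (Ai * U) = A * Ai := by
    rw [Matrix.mul_assoc, ← Matrix.mul_assoc A, ← Matrix.mul_assoc, Matrix.mul_assoc Ui, hQU, hUiU]
  have b2 : (A * Ai) * (Ui * A) = Ui * A := by rw [← Matrix.mul_assoc, hQUi]
  have c2 : (Ai * U) * (A * Ai) = Ai * U := by rw [Matrix.mul_assoc, hUQ]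
  have d2 : (Ai * U) * (Ui * A) = A * Ai := by
    rw [Matrix.mul_assoc, ← Matrix.mul_assoc U, hkey, hQA, hAiA]
  have hp1 : (1 - A * Ai + Ui * A) * (1 - A * Ai + Ai * U) = 1 := by
    simp only [Matrix.sub_mul, Matrix.add_mul, Matrix.mul_sub, Matrix.mul_add,
      Matrix.one_mul, Matrix.mul_one, hQQ, b1, c1, d1]
    abel
  have hp1' : (1 - A * Ai + Ai * U) * (1 - A * Ai + Ui * A) = 1 := by
    simp only [Matrix.sub_mul, Matrix.add_mul, Matrix.mul_sub, Matrix.mul_add,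
      Matrix.one_mul, Matrix.mul_one, hQQ, b2, c2, d2]
    abel
  -- second inverse pair
  have b3 : (A * Ai) * (U * Ai) = U * Ai := by rw [← Matrix.mul_assoc, hQU]
  have c3 : (A * Ui) * (A * Ai) = A * Ui := by rw [Matrix.mul_assoc, hUiQ]
  have d3 : (A * Ui) * (U * Ai) = A * Ai := by
    rw [Matrix.mul_assoc, ← Matrix.mul_assoc Ui, hUiU, ← Matrix.mul_assoc, hAQ]
  have b4 : (A * Ai) * (A * Ui) = A * Ui := by rw [← Matrix.mul_assoc, hQA]
  have c4 : (U * Ai) * (A * Ai) = U * Ai := by rw [Matrix.mul_assoc, hAiQ]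
  have d4 : (U * Ai) * (A * Ui) = A * Ai := by
    rw [Matrix.mul_assoc, ← Matrix.mul_assoc Ai, hAiA, ← Matrix.mul_assoc, hUQ, hkey]
  have hp2 : (1 - A * Ai + A * Ui) * (1 - A * Ai + U * Ai) = 1 := by
    simp only [Matrix.sub_mul, Matrix.add_mul, Matrix.mul_sub, Matrix.mul_add,
      Matrix.one_mul, Matrix.mul_one, hQQ, b3, c3, d3]
    abel
  have hp2' : (1 - A * Ai + U * Ai) * (1 - A * Ai + A * Ui) = 1 := by
    simp only [Matrix.sub_mul, Matrix.add_mul, Matrix.mul_sub, Matrix.mul_add,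
      Matrix.one_mul, Matrix.mul_one, hQQ, b4, c4, d4]
    abel
  have hu1 : IsUnit (1 - Ui * V) := by
    rw [hE1]; exact ⟨⟨_, _, hp1, hp1'⟩, rfl⟩
  have hu2 : IsUnit (1 - V * Ui) := by
    rw [hE2]; exact ⟨⟨_, _, hp2, hp2'⟩, rfl⟩
  have hinv1 : (1 - Ui * V)⁻¹ = 1 - A * Ai + Ai * U := by
    rw [hE1]; exact Matrix.inv_eq_right_inv hp1
  have hinv2 : (1 - V * Ui)⁻¹ = 1 - A * Ai + U * Ai := by
    rw [hE2]; exact Matrix.inv_eq_right_inv hp2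
  refine ⟨hu1, hu2, ?_, ?_⟩
  · rw [hinv1, Matrix.add_mul, Matrix.sub_mul, Matrix.one_mul, hQUi,
      Matrix.mul_assoc, hkey, hAiQ]
    abel
  · rw [hinv2, Matrix.mul_add, Matrix.mul_sub, Matrix.mul_one, hUiQ,
      ← Matrix.mul_assoc, hUiU, hQAi]
    abel
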